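/- If an n-agent network is k-redundant, then for any subset S ⊆ {1,…,n} with |S| ≥ n−k, argmin_x Σ_{i∈S} ‖A_i x − b_i‖² equals X* := argmin_x Σ_{i=1}^n ‖A_i x − b_i‖². -/

import Mathlib

open Matrix Finset

/-- The set of least squares solutions over the subset `S` of agents:
minimizers of `x ↦ ∑ i ∈ S, ‖A_i x − b_i‖²`. -/
def lsSet {n d : ℕ} {r : Fin n → ℕ} (A : ∀ i, Matrix (Fin (r i)) (Fin d) ℝ)
    (b : ∀ i, Fin (r i) → ℝ) (S : Finset (Fin n)) : Set (Fin d → ℝ) :=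
  {x | ∀ y : Fin d → ℝ,
      ∑ i ∈ S, ∑ j, ((A i *ᵥ x - b i) j) ^ 2 ≤ ∑ i ∈ S, ∑ j, ((A i *ᵥ y - b i) j) ^ 2}

/-- An `n`-agent network with data `(A_i, b_i)` is `k`-redundant if for any two subsets
`S₁, S₂` of agents with `|S₁| = |S₂| = n − k`, the least squares solution sets over
`S₁` and `S₂` coincide. -/
def kRedundant {n d : ℕ} {r : Fin n → ℕ} (A : ∀ i, Matrix (Fin (r i)) (Fin d) ℝ)
    (b : ∀ i, Fin (r i) → ℝ) (k : ℕ) : Prop :=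
  ∀ S₁ S₂ : Finset (Fin n), S₁.card = n - k → S₂.card = n - k →
    lsSet A b S₁ = lsSet A b S₂

-- existence of a global least squares solution
lemma exists_ls_univ {n d : ℕ} {r : Fin n → ℕ} (A : ∀ i, Matrix (Fin (r i)) (Fin d) ℝ)
    (b : ∀ i, Fin (r i) → ℝ) :
    ∃ x : Fin d → ℝ, ∀ y : Fin d → ℝ,
      ∑ i, ∑ j, ((A i *ᵥ x - b i) j) ^ 2 ≤ ∑ i, ∑ j, ((A i *ᵥ y - b i) j) ^ 2 := by
  classical
  let E := PiLp 2 (fun i : Fin n => EuclideanSpace ℝ (Fin (r i)))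
  let L : (Fin d → ℝ) →ₗ[ℝ] E :=
    { toFun := fun x => WithLp.toLp 2 (fun i => WithLp.toLp 2 (A i *ᵥ x))
      map_add' := by intro x y; ext i j; simp [Matrix.mulVec_add]; rfl
      map_smul' := by intro c x; ext i j; simp [Matrix.mulVec_smul]; rfl }
  let K : Submodule ℝ E := LinearMap.range L
  have hK : FiniteDimensional ℝ K := by
    exact Module.Finite.range L
  let c : E := WithLp.toLp 2 (fun i => WithLp.toLp 2 (b i))
  set v : E := (K.orthogonalProjectionOnto c : E) with hv
  obtain ⟨x, hx⟩ : v ∈ K := (K.orthogonalProjectionOnto c).2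
  have key : ∀ w : E, w ∈ K → ‖c - v‖ ≤ ‖c - w‖ := by
    intro w hw
    rw [hv, ← Submodule.starProjection_apply, Submodule.starProjection_minimal]
    exact ciInf_le ⟨0, fun t ht => by rcases ht with ⟨u, rfl⟩; positivity⟩ (⟨w, hw⟩ : K)
  have normsq : ∀ z : Fin d → ℝ,
      ∑ i, ∑ j, ((A i *ᵥ z - b i) j) ^ 2 = ‖L z - c‖ ^ 2 := by
    intro z
    rw [PiLp.norm_sq_eq_of_L2]
    refine Finset.sum_congr rfl fun i _ => ?_
    rw [EuclideanSpace.norm_eq, Real.sq_sqrt (by positivity)]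
    refine Finset.sum_congr rfl fun j _ => ?_
    rw [Real.norm_eq_abs, sq_abs]
    rfl
  refine ⟨x, fun y => ?_⟩
  rw [normsq, normsq]
  have h1 : ‖L x - c‖ ≤ ‖L y - c‖ := by
    rw [← norm_sub_rev c, ← norm_sub_rev c (L y)]
    rw [hx]
    exact key _ ⟨y, rfl⟩
  exact pow_le_pow_left₀ (norm_nonneg _) h1 2

lemma lsSet_nonempty {n d : ℕ} {r : Fin n → ℕ} (A : ∀ i, Matrix (Fin (r i)) (Fin d) ℝ)
    (b : ∀ i, Fin (r i) → ℝ) (S : Finset (Fin n)) : (lsSet A b S).Nonempty := by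
  classical
  set A' : ∀ i, Matrix (Fin (r i)) (Fin d) ℝ := fun i => if i ∈ S then A i else 0 with hA'
  set b' : ∀ i, Fin (r i) → ℝ := fun i => if i ∈ S then b i else 0 with hb'
  have hsum : ∀ z : Fin d → ℝ,
      ∑ i ∈ S, ∑ j, ((A i *ᵥ z - b i) j) ^ 2
        = ∑ i, ∑ j, ((A' i *ᵥ z - b' i) j) ^ 2 := by
    intro z
    rw [← Finset.sum_subset (Finset.subset_univ S)]
    · refine Finset.sum_congr rfl fun i hi => ?_
      simp [hA', hb', hi]
    · intro i _ hi
      simp [hA', hb', hi, Matrix.zero_mulVec]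
  obtain ⟨x, hx⟩ := exists_ls_univ A' b'
  exact ⟨x, fun y => by rw [hsum, hsum]; exact hx y⟩

-- key identity
lemma erase_sum_identity {n d : ℕ} {r : Fin n → ℕ} (A : ∀ i, Matrix (Fin (r i)) (Fin d) ℝ)
    (b : ∀ i, Fin (r i) → ℝ) (S : Finset (Fin n)) (x : Fin d → ℝ) :
    ∑ i ∈ S, ∑ j ∈ S.erase i, ∑ l, ((A j *ᵥ x - b j) l) ^ 2
      = ((S.card : ℝ) - 1) * ∑ j ∈ S, ∑ l, ((A j *ᵥ x - b j) l) ^ 2 := by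
  have h : ∀ i ∈ S, ∑ j ∈ S.erase i, ∑ l, ((A j *ᵥ x - b j) l) ^ 2
      = (∑ j ∈ S, ∑ l, ((A j *ᵥ x - b j) l) ^ 2) - ∑ l, ((A i *ᵥ x - b i) l) ^ 2 :=
    fun i hi => Finset.sum_erase_eq_sub hi
  rw [Finset.sum_congr rfl h, Finset.sum_sub_distrib, Finset.sum_const, nsmul_eq_mul]
  ring

lemma lsSet_step {n d : ℕ} {r : Fin n → ℕ} (A : ∀ i, Matrix (Fin (r i)) (Fin d) ℝ)
    (b : ∀ i, Fin (r i) → ℝ) (m : ℕ) (hm : 1 ≤ m) (T : Finset (Fin n)) (hT : T.card = m)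
    (hredm : ∀ S₁ S₂ : Finset (Fin n), S₁.card = m → S₂.card = m →
      lsSet A b S₁ = lsSet A b S₂) :
    ∀ p : ℕ, ∀ S : Finset (Fin n), S.card = m + p → lsSet A b S = lsSet A b T := by
  intro p
  induction p with
  | zero => exact fun S hS => hredm S T (by omega) hT
  | succ p ih =>
    intro S hSc
    have herase : ∀ i ∈ S, lsSet A b (S.erase i) = lsSet A b T := fun i hi =>
      ih _ (by rw [Finset.card_erase_of_mem hi]; omega)
    have hpos : (0:ℝ) < (S.card : ℝ) - 1 := by
      have h2 : 2 ≤ S.card := by omega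
      have : (2:ℝ) ≤ (S.card : ℝ) := by exact_mod_cast h2
      linarith
    have hsub : lsSet A b T ⊆ lsSet A b S := by
      intro x hx
      intro y
      have hsum : ∑ i ∈ S, ∑ j ∈ S.erase i, ∑ l, ((A j *ᵥ x - b j) l) ^ 2
          ≤ ∑ i ∈ S, ∑ j ∈ S.erase i, ∑ l, ((A j *ᵥ y - b j) l) ^ 2 := by
        refine Finset.sum_le_sum fun i hi => ?_
        have hxi : x ∈ lsSet A b (S.erase i) := (herase i hi).symm ▸ hx
        exact hxi y
      rw [erase_sum_identity, erase_sum_identity] at hsum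
      exact le_of_mul_le_mul_left hsum hpos
    obtain ⟨x', hx'⟩ := lsSet_nonempty A b T
    have hx'S : x' ∈ lsSet A b S := hsub hx'
    refine Set.Subset.antisymm (fun x hx => ?_) hsub
    have heq : ∑ j ∈ S, ∑ l, ((A j *ᵥ x - b j) l) ^ 2
        = ∑ j ∈ S, ∑ l, ((A j *ᵥ x' - b j) l) ^ 2 := le_antisymm (hx x') (hx'S x)
    have hsumeq : ∑ i ∈ S, ∑ j ∈ S.erase i, ∑ l, ((A j *ᵥ x' - b j) l) ^ 2
        = ∑ i ∈ S, ∑ j ∈ S.erase i, ∑ l, ((A j *ᵥ x - b j) l) ^ 2 := by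
      rw [erase_sum_identity, erase_sum_identity, heq]
    have hle : ∀ i ∈ S, ∑ j ∈ S.erase i, ∑ l, ((A j *ᵥ x' - b j) l) ^ 2
        ≤ ∑ j ∈ S.erase i, ∑ l, ((A j *ᵥ x - b j) l) ^ 2 := by
      intro i hi
      have hxi : x' ∈ lsSet A b (S.erase i) := (herase i hi).symm ▸ hx'
      exact hxi x
    have hall := (Finset.sum_eq_sum_iff_of_le hle).1 hsumeq
    obtain ⟨i, hi⟩ : S.Nonempty := Finset.card_pos.1 (by omega)
    have hxe : x ∈ lsSet A b (S.erase i) := by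
      intro y
      have hxi : x' ∈ lsSet A b (S.erase i) := (herase i hi).symm ▸ hx'
      calc ∑ j ∈ S.erase i, ∑ l, ((A j *ᵥ x - b j) l) ^ 2
          = ∑ j ∈ S.erase i, ∑ l, ((A j *ᵥ x' - b j) l) ^ 2 := (hall i hi).symm
        _ ≤ ∑ j ∈ S.erase i, ∑ l, ((A j *ᵥ y - b j) l) ^ 2 := hxi y
    rw [← herase i hi]
    exact hxe

/-- If an `n`-agent network is `k`-redundant, then for any subset `S`
with `|S| ≥ n − k`, the least squares solution set over `S` equals the global least
squares solution set `X* = argmin_x ∑_{i=1}^n ‖A_i x − b_i‖²`. -/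
theorem lsSet_eq_global {n d : ℕ} {r : Fin n → ℕ}
    (A : ∀ i, Matrix (Fin (r i)) (Fin d) ℝ) (b : ∀ i, Fin (r i) → ℝ)
    (k : ℕ) (hk : k ≤ n - 1) (hred : kRedundant A b k)
    (S : Finset (Fin n)) (hS : n - k ≤ S.card) :
    lsSet A b S = lsSet A b Finset.univ := by
  rcases Nat.eq_zero_or_pos n with hn | hn
  · subst hn
    have : S = Finset.univ := Finset.eq_univ_of_forall fun i => i.elim0
    rw [this]
  · have hm : 1 ≤ n - k := by omega
    obtain ⟨T, -, hT⟩ := Finset.exists_subset_card_eq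
      (show n - k ≤ (Finset.univ : Finset (Fin n)).card by simpa using Nat.sub_le n k)
    have h1 := lsSet_step A b (n - k) hm T hT (fun S₁ S₂ h1 h2 => hred S₁ S₂ (by omega) (by omega)) (S.card - (n - k)) S (by omega)
    have h2 := lsSet_step A b (n - k) hm T hT (fun S₁ S₂ h1 h2 => hred S₁ S₂ (by omega) (by omega)) (n - (n - k)) Finset.univ (by rw [Finset.card_univ, Fintype.card_fin]; omega)
    rw [h1, h2]
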